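/- arXiv:2001.09529 — 3 statements merged into one kernel-verified Lean document; each statement's English description precedes it below -/
import Mathlib

section
/- Let A : ℝ² → ℝ² be a homeomorphism with a fixed point x, and suppose for all ε₁, ε₂ > 0 there exists n₀ such that |A⁻ⁿ(u) − A⁻ⁿ(v)| ≤ ε₁|u − v| + ε₂ for all u, v ∈ ℝ² and n ≥ n₀. Then for every open neighborhood U of x, ⋃_{n∈ℕ₀} Aⁿ(U) = ℝ². -/
noncomputable abbrev E := EuclideanSpace ℝ (Fin 2)

theorem stmt5 (A : Homeomorph E E) (x : E) (hfix : A x = x)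
    (hcontr : ∀ ε₁ ε₂ : ℝ, 0 < ε₁ → 0 < ε₂ → ∃ n₀ : ℕ, ∀ n : ℕ, n₀ ≤ n → ∀ u v : E,
      ‖(⇑A.symm)^[n] u - (⇑A.symm)^[n] v‖ ≤ ε₁ * ‖u - v‖ + ε₂)
    (U : Set E) (hU : IsOpen U) (hxU : x ∈ U) :
    ⋃ n : ℕ, (⇑A)^[n] '' U = Set.univ := by
  have hfix' : A.symm x = x := by
    conv_lhs => rw [← hfix]
    exact A.symm_apply_apply x
  apply Set.eq_univ_of_forall
  intro y
  obtain ⟨r, hr, hball⟩ := Metric.isOpen_iff.mp hU x hxU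
  have hd : (0:ℝ) < ‖y - x‖ + 1 := by positivity
  have hε₁ : (0:ℝ) < r / (2 * (‖y - x‖ + 1)) := by positivity
  obtain ⟨n₀, hn₀⟩ := hcontr _ (r / 2) hε₁ (by positivity)
  have key := hn₀ n₀ le_rfl y x
  have hfixn : (⇑A.symm)^[n₀] x = x := Function.iterate_fixed hfix' n₀
  rw [hfixn] at key
  have hmem : (⇑A.symm)^[n₀] y ∈ U := by
    apply hball
    rw [Metric.mem_ball, dist_eq_norm]
    calc ‖(⇑A.symm)^[n₀] y - x‖ ≤ r / (2 * (‖y - x‖ + 1)) * ‖y - x‖ + r / 2 := key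
      _ < r / 2 + r / 2 := by
          apply add_lt_add_left
          rw [div_mul_eq_mul_div, div_lt_div_iff₀ (by positivity) (by norm_num)]
          ring_nf
          nlinarith [norm_nonneg (y - x)]
      _ = r := by ring
  refine Set.mem_iUnion.mpr ⟨n₀, (⇑A.symm)^[n₀] y, hmem, ?_⟩
  exact (Function.LeftInverse.iterate A.apply_symm_apply n₀) y
end

section
/- Let A : ℝ² → ℝ² be a homeomorphism with a fixed point x, satisfying: for all ε₁, ε₂ > 0 there exists n₀ such that |A⁻ⁿ(u) − A⁻ⁿ(v)| ≤ ε₁|u − v| + ε₂ for all u, v ∈ ℝ² and n ≥ n₀. Then for every bounded open neighborhood U of x, there exists N such that U ⊆ Aⁿ(U) for all n ≥ N. -/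
theorem stmt6 (A : Homeomorph E E) (x : E) (hfix : A x = x)
    (hcontr : ∀ ε₁ ε₂ : ℝ, 0 < ε₁ → 0 < ε₂ → ∃ n₀ : ℕ, ∀ n : ℕ, n₀ ≤ n → ∀ u v : E,
      ‖(⇑A.symm)^[n] u - (⇑A.symm)^[n] v‖ ≤ ε₁ * ‖u - v‖ + ε₂)
    (U : Set E) (hU : IsOpen U) (hxU : x ∈ U) (hbdd : Bornology.IsBounded U) :
    ∃ N : ℕ, ∀ n : ℕ, N ≤ n → U ⊆ (⇑A)^[n] '' U := by
  -- get ε with ball x ε ⊆ U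
  obtain ⟨ε, hε, hball⟩ := Metric.isOpen_iff.1 hU x hxU
  -- get R bounding U
  obtain ⟨R, hR⟩ := (Metric.isBounded_iff_subset_ball x).1 hbdd
  have hRpos : 0 < R + 1 := by
    have : (0:ℝ) ≤ dist x x := dist_nonneg
    have hx := hR hxU
    simp only [Metric.mem_ball] at hx
    linarith [dist_nonneg (x := x) (y := x)]
  obtain ⟨n₀, hn₀⟩ := hcontr (ε / (2 * (R + 1))) (ε / 2)
    (by positivity) (by positivity)
  refine ⟨n₀, fun n hn u hu => ?_⟩
  have hsymmfix : (⇑A.symm)^[n] x = x := by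
    have : A.symm x = x := by
      conv_lhs => rw [← hfix]
      exact A.symm_apply_apply x
    exact Function.iterate_fixed this n
  have key := hn₀ n hn u x
  rw [hsymmfix] at key
  have hdist : dist u x < R + 1 := by
    have := hR hu
    simp only [Metric.mem_ball] at this
    linarith
  have hnorm : ‖u - x‖ < R + 1 := by rwa [← dist_eq_norm]
  have h1 : ε / (2 * (R + 1)) * ‖u - x‖ < ε / 2 := by
    have := mul_lt_mul_of_pos_left hnorm (show 0 < ε / (2 * (R + 1)) by positivity)
    have heq : ε / (2 * (R + 1)) * (R + 1) = ε / 2 := by field_simp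
    linarith
  have hin : (⇑A.symm)^[n] u ∈ U := by
    apply hball
    simp only [Metric.mem_ball, dist_eq_norm]
    calc ‖(⇑A.symm)^[n] u - x‖ ≤ ε / (2 * (R + 1)) * ‖u - x‖ + ε / 2 := key
      _ < ε / 2 + ε / 2 := by linarith
      _ = ε := by ring
  refine ⟨(⇑A.symm)^[n] u, hin, ?_⟩
  have : Function.LeftInverse ⇑A ⇑A.symm := A.apply_symm_apply
  exact this.iterate n u
end

section
/- Let Θ : ℝ² → X be a continuous map into a metric space X with Θ ∘ τ_γ = Θ for all γ in a rank-2 lattice Γ, and suppose each fiber Θ⁻¹(p), p ∈ X, is a discrete subset of ℝ². Then for every ε > 0 there exists δ > 0 such that every connected set K ⊂ ℝ² with diam(Θ(K)) < δ satisfies diam(K) < ε. -/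
theorem stmt9 {X : Type*} [MetricSpace X] (Γ : AddSubgroup E) [DiscreteTopology Γ]
    (hspan : Submodule.span ℝ (Γ : Set E) = ⊤)
    (Θ : E → X) (hcont : Continuous Θ)
    (hper : ∀ u : E, ∀ γ ∈ Γ, Θ (u + γ) = Θ u)
    (hfib : ∀ p : X, ∀ x ∈ Θ ⁻¹' {p}, ∃ ε > 0, ∀ y ∈ Θ ⁻¹' {p}, ‖y - x‖ < ε → y = x) :
    ∀ ε : ℝ, 0 < ε → ∃ δ : ℝ, 0 < δ ∧ ∀ K : Set E, IsConnected K →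
      EMetric.diam (Θ '' K) < ENNReal.ofReal δ → EMetric.diam K < ENNReal.ofReal ε := by
  intro ε hε
  by_contra hno
  push_neg at hno
  -- Step A: a bounded set of representatives modulo Γ
  obtain ⟨s, hsΓ, hs_span, hs_li⟩ := exists_linearIndependent ℝ (Γ : Set E)
  have hsfin : s.Finite := hs_li.setFinite
  haveI := hsfin.fintype
  let B : Module.Basis s ℝ E := Module.Basis.mk hs_li
    (by rw [Subtype.range_coe, hs_span, hspan])
  set R : ℝ := ∑ i, ‖B i‖ with hR
  have hred : ∀ m : E, ∃ γ ∈ Γ, ‖m + γ‖ ≤ R := by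
    intro m
    have h1 : -m + ZSpan.fract B m ∈ Submodule.span ℤ (Set.range ⇑B) :=
      (ZSpan.fract_eq_fract B m _).mp (ZSpan.fract_fract B m).symm
    have hle : Submodule.span ℤ (Set.range ⇑B) ≤ AddSubgroup.toIntSubmodule Γ := by
      rw [Submodule.span_le]
      rw [show Set.range ⇑B = s by rw [Module.Basis.coe_mk, Subtype.range_coe]]
      exact hsΓ
    refine ⟨-m + ZSpan.fract B m, hle h1, ?_⟩
    have : m + (-m + ZSpan.fract B m) = ZSpan.fract B m := by abel
    rw [this]
    exact ZSpan.norm_fract_le B m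
  -- Step B: bad connected sets
  have hmain : ∀ n : ℕ, ∃ K : Set E, IsConnected K ∧
      EMetric.diam (Θ '' K) < ENNReal.ofReal (1 / (n + 1)) ∧
      ENNReal.ofReal ε ≤ EMetric.diam K := by
    intro n
    obtain ⟨K, hK1, hK2, hK3⟩ := hno (1 / (n + 1)) (by positivity)
    exact ⟨K, hK1, hK2, hK3⟩
  choose K hKc hKd1 hKd2 using hmain
  -- pick base points and points at any prescribed small distance
  have hpts : ∀ n : ℕ, ∃ x ∈ K n, ∀ r : ℝ, 0 ≤ r → r ≤ ε / 4 →
      ∃ u ∈ K n, dist u x = r := by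
    intro n
    have hab : ∃ a ∈ K n, ∃ b ∈ K n, ENNReal.ofReal (ε / 2) < edist a b := by
      by_contra hc
      push_neg at hc
      have h1 : EMetric.diam (K n) ≤ ENNReal.ofReal (ε / 2) :=
        EMetric.diam_le fun a ha b hb => hc a ha b hb
      have h2 : ENNReal.ofReal (ε / 2) < ENNReal.ofReal ε :=
        (ENNReal.ofReal_lt_ofReal_iff hε).mpr (by linarith)
      exact absurd ((hKd2 n).trans h1) (not_le.mpr h2)
    obtain ⟨a, ha, b, hb, hab⟩ := hab
    have hdab : ε / 2 < dist a b := by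
      by_contra hc
      push_neg at hc
      rw [edist_dist] at hab
      exact absurd (ENNReal.ofReal_le_ofReal hc) (not_le.mpr hab)
    refine ⟨a, ha, fun r hr0 hr1 => ?_⟩
    have hIVT := (hKc n).isPreconnected.intermediate_value ha hb
      (f := fun u => dist u a) ((continuous_id.dist continuous_const).continuousOn)
    have hmem : r ∈ Set.Icc (dist a a) (dist b a) := by
      rw [dist_self, dist_comm b a, dist_comm a b] at *
      exact ⟨hr0, by linarith⟩
    obtain ⟨u, hu, hur⟩ := hIVT hmem
    exact ⟨u, hu, hur⟩
  choose x hx hx2 using hpts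
  choose γ hγΓ hγR using fun n => hred (x n)
  -- translated base points; Bolzano-Weierstrass
  set x' : ℕ → E := fun n => x n + γ n with hx'
  obtain ⟨xb, -, φ, hφ, hxconv⟩ := tendsto_subseq_of_bounded
    (Metric.isBounded_closedBall (x := (0 : E)) (r := R))
    (x := x') (fun n => by simpa [mem_closedBall_zero_iff] using hγR n)
  obtain ⟨ε₀, hε₀, hfib'⟩ := hfib (Θ xb) xb rfl
  set r : ℝ := min (ε / 4) (ε₀ / 2) with hrdef
  have hr0 : 0 < r := lt_min (by linarith) (by linarith)
  have hr1 : r ≤ ε / 4 := min_le_left _ _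
  have hr2 : r < ε₀ := (min_le_right _ _).trans_lt (by linarith)
  choose u hu hud using fun n => hx2 (φ n) r hr0.le hr1
  set u' : ℕ → E := fun n => u n + γ (φ n) with hu'
  have hu'dist : ∀ n, dist (u' n) (x' (φ n)) = r := by
    intro n
    simp only [hu', hx', dist_add_right]
    exact hud n
  have hu'bd : ∀ n, u' n ∈ Metric.closedBall (0 : E) (R + r) := by
    intro n
    rw [mem_closedBall_zero_iff]
    calc ‖u' n‖ = dist (u' n) 0 := by rw [dist_zero_right]
      _ ≤ dist (u' n) (x' (φ n)) + dist (x' (φ n)) 0 := dist_triangle _ _ _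
      _ = r + ‖x' (φ n)‖ := by rw [hu'dist n, dist_zero_right]
      _ ≤ r + R := by have := hγR (φ n); exact add_le_add_right this r
      _ = R + r := add_comm _ _
  obtain ⟨ub, -, ψ, hψ, huconv⟩ := tendsto_subseq_of_bounded
    (Metric.isBounded_closedBall (x := (0 : E)) (r := R + r))
    (x := u') hu'bd
  -- limits
  have hxconv2 : Filter.Tendsto (fun n => x' (φ (ψ n))) Filter.atTop (nhds xb) :=
    hxconv.comp hψ.tendsto_atTop
  have hA : Filter.Tendsto (fun n => Θ (x' (φ (ψ n)))) Filter.atTop (nhds (Θ xb)) :=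
    (hcont.tendsto xb).comp hxconv2
  have hB : Filter.Tendsto (fun n => Θ (u' (ψ n))) Filter.atTop (nhds (Θ ub)) :=
    (hcont.tendsto ub).comp huconv
  -- the distance between images tends to 0
  have hdistbd : ∀ n : ℕ, dist (Θ (u' (ψ n))) (Θ (x' (φ (ψ n)))) ≤ 1 / (n + 1) := by
    intro n
    have h1 : Θ (u' (ψ n)) = Θ (u (ψ n)) := hper _ _ (hγΓ (φ (ψ n)))
    have h2 : Θ (x' (φ (ψ n))) = Θ (x (φ (ψ n))) := hper _ _ (hγΓ (φ (ψ n)))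
    rw [h1, h2]
    have hmem1 : Θ (u (ψ n)) ∈ Θ '' K (φ (ψ n)) := Set.mem_image_of_mem _ (hu (ψ n))
    have hmem2 : Θ (x (φ (ψ n))) ∈ Θ '' K (φ (ψ n)) := Set.mem_image_of_mem _ (hx (φ (ψ n)))
    have hle : edist (Θ (u (ψ n))) (Θ (x (φ (ψ n)))) < ENNReal.ofReal (1 / (φ (ψ n) + 1)) :=
      lt_of_le_of_lt (EMetric.edist_le_diam_of_mem hmem1 hmem2) (hKd1 (φ (ψ n)))
    rw [edist_dist] at hle
    have hd1 : dist (Θ (u (ψ n))) (Θ (x (φ (ψ n)))) < 1 / ((φ (ψ n) : ℝ) + 1) :=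
      (ENNReal.ofReal_lt_ofReal_iff_of_nonneg dist_nonneg).mp hle
    have hle2 : (1 : ℝ) / ((φ (ψ n) : ℝ) + 1) ≤ 1 / ((n : ℝ) + 1) := by
      apply one_div_le_one_div_of_le (by positivity)
      have : (n : ℝ) ≤ (φ (ψ n) : ℝ) := by
        exact_mod_cast (hφ.comp hψ).le_apply
      linarith
    linarith
  have hd0 : Filter.Tendsto (fun n : ℕ => dist (Θ (u' (ψ n))) (Θ (x' (φ (ψ n)))))
      Filter.atTop (nhds 0) :=
    squeeze_zero (fun n => dist_nonneg) hdistbd tendsto_one_div_add_atTop_nhds_zero_nat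
  -- hence Θ ub = Θ xb
  have hΘeq : Θ ub = Θ xb := by
    have hB' : Filter.Tendsto (fun n => Θ (u' (ψ n))) Filter.atTop (nhds (Θ xb)) := by
      rw [tendsto_iff_dist_tendsto_zero]
      have hbnd : ∀ n : ℕ, dist (Θ (u' (ψ n))) (Θ xb) ≤
          dist (Θ (u' (ψ n))) (Θ (x' (φ (ψ n)))) + dist (Θ (x' (φ (ψ n)))) (Θ xb) :=
        fun n => dist_triangle _ _ _
      have hA' : Filter.Tendsto (fun n => dist (Θ (x' (φ (ψ n)))) (Θ xb))
          Filter.atTop (nhds 0) := tendsto_iff_dist_tendsto_zero.mp hA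
      have hsum : Filter.Tendsto (fun n => dist (Θ (u' (ψ n))) (Θ (x' (φ (ψ n)))) +
          dist (Θ (x' (φ (ψ n)))) (Θ xb)) Filter.atTop (nhds 0) := by
        simpa using hd0.add hA'
      exact squeeze_zero (fun n => dist_nonneg) hbnd hsum
    exact tendsto_nhds_unique hB hB'
  -- and dist ub xb = r
  have hdr : dist ub xb = r := by
    have h1 : Filter.Tendsto (fun n => dist (u' (ψ n)) (x' (φ (ψ n))))
        Filter.atTop (nhds (dist ub xb)) := huconv.dist hxconv2
    have h2 : Filter.Tendsto (fun n => dist (u' (ψ n)) (x' (φ (ψ n))))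
        Filter.atTop (nhds r) := by
      simp only [fun n => hu'dist (ψ n)]
      exact tendsto_const_nhds
    exact tendsto_nhds_unique h1 h2
  have hubfib : ub ∈ Θ ⁻¹' {Θ xb} := by
    simp only [Set.mem_preimage, Set.mem_singleton_iff]; exact hΘeq
  have := hfib' ub hubfib (by rw [← dist_eq_norm, hdr]; exact hr2)
  rw [this, dist_self] at hdr
  exact absurd hdr.symm (ne_of_gt hr0)
end
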